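/- Let k be a perfect field, let A be a scheme finite over Spec k, and let X be a connected reduced scheme over k that admits a k-point (i.e., the structure morphism X → Spec k admits a section). Then every morphism φ: X → A of k-schemes is constant. -/

import Mathlib

open CategoryTheory CategoryTheory.Limits AlgebraicGeometry Polynomial


lemma idem_local {R : Type*} [CommRing R] [IsLocalRing R] {e : R}
    (he : IsIdempotentElem e) : e = 0 ∨ e = 1 := by
  rcases IsLocalRing.isUnit_or_isUnit_one_sub_self e with h | h
  · right
    exact h.mul_left_cancel (by rw [he.eq, mul_one])
  · left
    exact h.mul_left_cancel (by rw [mul_zero, sub_mul, one_mul, he.eq, sub_self])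

lemma trick {R k : Type*} [CommRing R] [Field k]
    (hid : ∀ e : R, IsIdempotentElem e → e = 0 ∨ e = 1)
    (ι : k →+* R) (ε : R →+* k) (s : R) (hεs : ε s = 0)
    (D : k[X]) (hc : D.coeff 0 ≠ 0) (h : s * Polynomial.eval₂ ι s D = 0) : s = 0 := by
  set a := D.coeff 0 with ha
  set hh := Polynomial.eval₂ ι s D.divX with hhh
  set w : R := -(ι a⁻¹ * hh) with hw
  have hu : (ι a) * ι a⁻¹ = 1 := by rw [← map_mul, mul_inv_cancel₀ hc, map_one]
  have h1 : s * (s * hh + ι a) = 0 := by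
    have hD : X * D.divX + C a = D := X_mul_divX_add D
    calc s * (s * hh + ι a) = s * Polynomial.eval₂ ι s (X * D.divX + C a) := by
          simp [eval₂_add, eval₂_mul, eval₂_X, eval₂_C, hhh]
    _ = 0 := by rw [hD, h]
  have h2 : s * (ι a) = s * s * (-hh) := by linear_combination h1
  have hsw : s = s * s * w := by
    calc s = s * ((ι a) * ι a⁻¹) := by rw [hu, mul_one]
    _ = (s * ι a) * ι a⁻¹ := by ring
    _ = (s * s * (-hh)) * ι a⁻¹ := by rw [h2]
    _ = s * s * w := by rw [hw]; ring
  have he : IsIdempotentElem (s * w) := by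
    show s * w * (s * w) = s * w
    calc s * w * (s * w) = (s * s * w) * w := by ring
    _ = s * w := by rw [← hsw]
  rcases hid _ he with h0 | h1' 
  · calc s = s * s * w := hsw
    _ = (s * w) * s := by ring
    _ = 0 := by rw [h0, zero_mul]
  · exfalso
    have := congrArg ε h1'
    rw [map_mul, hεs, zero_mul, map_one] at this
    exact zero_ne_one this

lemma core_lemma {R k : Type*} [CommRing R] [IsReduced R] [Field k]
    (hid : ∀ e : R, IsIdempotentElem e → e = 0 ∨ e = 1)
    (ι : k →+* R) (ε : R →+* k) (s : R) (hεs : ε s = 0) :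
    ∀ (n : ℕ) (D : k[X]), D.natDegree ≤ n → D ≠ 0 → s * Polynomial.eval₂ ι s D = 0 → s = 0 := by
  intro n
  induction n with
  | zero =>
    intro D hdeg hD0 h
    refine trick hid ι ε s hεs D (fun hc => hD0 ?_) h
    rw [Polynomial.eq_C_of_natDegree_eq_zero (Nat.le_zero.mp hdeg), hc, Polynomial.C_0]
  | succ n ih =>
    intro D hdeg hD0 h
    by_cases hc : D.coeff 0 = 0
    · have hD : X * D.divX = D := by
        conv_rhs => rw [← X_mul_divX_add D]
        rw [hc, Polynomial.C_0, add_zero]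
      have hdiv0 : D.divX ≠ 0 := fun h0 => hD0 (by rw [← hD, h0, mul_zero])
      have h' : s * (s * Polynomial.eval₂ ι s D.divX) = 0 := by
        rw [← h]
        conv_rhs => rw [← hD]
        simp [eval₂_mul, eval₂_X]
      have hsh : s * Polynomial.eval₂ ι s D.divX = 0 := by
        refine IsReduced.eq_zero _ ⟨2, ?_⟩
        rw [pow_two]
        linear_combination (Polynomial.eval₂ ι s D.divX) * h'
      refine ih D.divX ?_ hdiv0 hsh
      have := Polynomial.natDegree_divX_eq_natDegree_tsub_one (p := D)
      omega
    · exact trick hid ι ε s hεs D hc h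

lemma key_elem {R k : Type*} [CommRing R] [IsReduced R] [Field k]
    (hid : ∀ e : R, IsIdempotentElem e → e = 0 ∨ e = 1)
    (ι : k →+* R) (ε : R →+* k) (hει : ∀ a, ε (ι a) = a)
    (r : R) (P : k[X]) (hP : P.Monic) (hr : Polynomial.eval₂ ι r P = 0) :
    r = ι (ε r) := by
  set c := ε r with hc
  set s := r - ι c with hs
  have hεs : ε s = 0 := by rw [hs, map_sub, hει, hc, sub_self]
  have hQmonic : (P.comp (X + C c)).Monic := hP.comp_X_add_C c
  have hQeval : Polynomial.eval₂ ι s (P.comp (X + C c)) = 0 := by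
    rw [Polynomial.eval₂_comp]
    have : Polynomial.eval₂ ι s (X + C c) = r := by
      rw [eval₂_add, eval₂_X, eval₂_C, hs]; ring
    rw [this, hr]
  have hs0 : s = 0 :=
    core_lemma hid ι ε s hεs _ _ le_rfl hQmonic.ne_zero (by rw [hQeval, mul_zero])
  rw [hs] at hs0
  exact sub_eq_zero.mp hs0



lemma idem_trivial_of_connected (X : Scheme) [PreconnectedSpace X] [IsReduced X]
    (e : Γ(X, ⊤)) (he : IsIdempotentElem e) : e = 0 ∨ e = 1 := by
  have key : ∀ x : X, X.presheaf.germ ⊤ x trivial e = 0 ∨ X.presheaf.germ ⊤ x trivial e = 1 :=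
    fun x => idem_local (he.map (X.presheaf.germ ⊤ x trivial).hom)
  have hcompl : (↑(X.basicOpen e) : Set X)ᶜ = ↑(X.basicOpen (1 - e)) := by
    ext x
    simp only [Set.mem_compl_iff, SetLike.mem_coe, Scheme.mem_basicOpen_top, map_sub, map_one]
    rcases key x with h0 | h1
    · rw [h0]
      simp
    · rw [h1]
      simp
  have hclopen : IsClopen (↑(X.basicOpen e) : Set X) := by
    refine ⟨?_, (X.basicOpen e).isOpen⟩
    rw [← isOpen_compl_iff, hcompl]
    exact (X.basicOpen (1 - e)).isOpen
  rcases (isClopen_iff.mp hclopen) with h | h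
  · left
    have : X.basicOpen e = ⊥ := by
      ext1; exact h
    rwa [basicOpen_eq_bot_iff] at this
  · right
    have hunit : IsUnit e := by
      apply X.toRingedSpace.isUnit_of_isUnit_germ
      intro x hx
      rw [show (X.toRingedSpace.presheaf.germ ⊤ x hx) e = (X.presheaf.germ ⊤ x trivial) e from rfl,
        ← Scheme.mem_basicOpen_top]
      show x ∈ (↑(X.basicOpen e) : Set X)
      rw [h]
      trivial
    exact hunit.mul_left_cancel (by rw [he.eq, mul_one])

def IsConstantOver {S : Scheme} {X Y : Over S} (φ : X ⟶ Y) : Prop :=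
  ∀ (T : Over S) (f g : T ⟶ X), f ≫ φ = g ≫ φ

theorem constant_of_connected_reduced_to_finite (k : Type) [Field k] [PerfectField k]
    (A X : Over (Spec (CommRingCat.of k)))
    [IsFinite A.hom] [ConnectedSpace X.left] [IsReduced X.left]
    (σ : Spec (CommRingCat.of k) ⟶ X.left) (hσ : σ ≫ X.hom = 𝟙 _)
    (φ : X ⟶ A) : IsConstantOver φ := by
  haveI : IsAffine ((Functor.fromPUnit (Spec (CommRingCat.of k))).obj A.right) :=
    inferInstanceAs (IsAffine (Spec (CommRingCat.of k)))
  haveI hA : IsAffine A.left := isAffine_of_isAffineHom A.hom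
  suffices h : φ.left = X.hom ≫ σ ≫ φ.left by
    intro T f g
    apply Over.OverMorphism.ext
    rw [Over.comp_left, Over.comp_left, h]
    simp only [← Category.assoc]
    rw [Over.w f, Over.w g]
  apply ext_of_isAffine
  rw [Scheme.Hom.comp_appTop, Scheme.Hom.comp_appTop]
  -- ring homs
  have hfin : RingHom.Finite (A.hom.appTop.hom) :=
    IsFinite.finite_app A.hom ⊤ (isAffineOpen_top _)
  have hint := hfin.to_isIntegral
  have hκ : ∀ y, φ.left.appTop (A.hom.appTop y) = X.hom.appTop y := by
    have := congrArg Scheme.Hom.appTop (Over.w φ)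
    rw [Scheme.Hom.comp_appTop] at this
    intro y
    exact congrFun (congrArg (↑·) this) y
  have hει' : ∀ y, σ.appTop (X.hom.appTop y) = y := by
    have := congrArg Scheme.Hom.appTop hσ
    rw [Scheme.Hom.comp_appTop, Scheme.Hom.id_appTop] at this
    intro y
    exact congrFun (congrArg (↑·) this) y
  ext b
  show φ.left.appTop b = X.hom.appTop (σ.appTop (φ.left.appTop b))
  obtain ⟨P, hPm, hPe⟩ := hint b
  set R := Γ(X.left, ⊤) with hR
  set eI := Scheme.ΓSpecIso (CommRingCat.of k) with heI
  set ι : k →+* R := RingHom.comp (X.hom.appTop.hom) eI.inv.hom with hι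
  set ε : R →+* k := RingHom.comp eI.hom.hom (σ.appTop.hom) with hε
  have hει : ∀ a, ε (ι a) = a := fun a => by
    show eI.hom (σ.appTop (X.hom.appTop (eI.inv a))) = a
    rw [hει']
    exact (by rw [eI.inv_hom_id]; rfl : (eI.inv ≫ eI.hom) a = a)
  have hid := idem_trivial_of_connected X.left
  have hr : Polynomial.eval₂ ι (φ.left.appTop b) (P.map (eI.hom.hom)) = 0 := by
    rw [Polynomial.eval₂_map]
    have h1 : (RingHom.comp ι (eI.hom.hom)) = (X.hom.appTop.hom : _ →+* _) := by
      refine RingHom.ext fun a => ?_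
      show X.hom.appTop (eI.inv (eI.hom a)) = X.hom.appTop a
      congr 1
      exact (by rw [eI.hom_inv_id]; rfl : (eI.hom ≫ eI.inv) a = a)
    rw [h1]
    have h2 : (RingHom.comp (φ.left.appTop.hom) (A.hom.appTop.hom)) = (X.hom.appTop.hom : _ →+* _) :=
      RingHom.ext hκ
    rw [← h2, ← Polynomial.hom_eval₂, hPe, map_zero]
  have hkey := key_elem hid ι ε hει (φ.left.appTop b) _ (hPm.map _) hr
  calc φ.left.appTop b = ι (ε (φ.left.appTop b)) := hkey
  _ = X.hom.appTop (σ.appTop (φ.left.appTop b)) := by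
      show X.hom.appTop (eI.inv (eI.hom (σ.appTop _))) = _
      congr 1
      exact (by rw [eI.hom_inv_id]; rfl :
        (eI.hom ≫ eI.inv) (σ.appTop (φ.left.appTop b)) = σ.appTop (φ.left.appTop b))
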